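/- If I is a reasonable interpretation (i.e., I never assigns a value T_α with α a limit ordinal), then T_P(I) is also reasonable; consequently T_P^n(I) is reasonable for all n < ω. -/

import Mathlib

open Ordinal Set

noncomputable section
attribute [local instance] Classical.propDecidable

namespace IVS

/-- Countable ordinals: ordinals below `ω₁`. -/
abbrev Ord1 := {o : Ordinal.{0} // o < ω₁}

theorem zero_lt_omega1 : (0 : Ordinal) < ω₁ := omega_pos 1

theorem succ_lt_omega1 {o : Ordinal} (h : o < ω₁) : o + 1 < ω₁ := by
  have h' := (Cardinal.isSuccLimit_omega 1).succ_lt h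
  rwa [Order.succ_eq_add_one] at h'

/-- zero as a countable ordinal -/
def O0 : Ord1 := ⟨0, zero_lt_omega1⟩

/-- successor on countable ordinals -/
def Ord1.succ (a : Ord1) : Ord1 := ⟨a.1 + 1, succ_lt_omega1 a.2⟩

/-- The truth domain `V`: `F_α < ⋯ < 0 < ⋯ < T_α` realized as a lexicographic sum. -/
abbrev TV := Ord1 ⊕ₗ (Unit ⊕ₗ Ord1ᵒᵈ)

/-- the false value `F_α` -/
def TV.F (a : Ord1) : TV := toLex (Sum.inl a)
/-- the middle value `0` -/
def TV.Z : TV := toLex (Sum.inr (toLex (Sum.inl ())))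
/-- the true value `T_α` -/
def TV.T (a : Ord1) : TV := toLex (Sum.inr (toLex (Sum.inr (OrderDual.toDual a))))

/-- the order of a truth value (`⊤` codes `+∞`, the order of `0`) -/
def ordOf (v : TV) : WithTop Ordinal :=
  match ofLex v with
  | .inl a => (a.1 : Ordinal)
  | .inr b =>
    match ofLex b with
    | .inl _ => ⊤
    | .inr a => ((OrderDual.ofDual a).1 : Ordinal)

/-- negation-as-failure: `¬F_α = T_{α+1}`, `¬T_α = F_{α+1}`, `¬0 = 0`. -/
def negv (v : TV) : TV :=
  match ofLex v with
  | .inl a => TV.T a.succ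
  | .inr b =>
    match ofLex b with
    | .inl _ => TV.Z
    | .inr a => TV.F (OrderDual.ofDual a).succ

/-- Literals of a propositional normal program (atoms are natural numbers). -/
inductive Lit where
  | pos (n : ℕ)
  | neg (n : ℕ)
  | tt
  | ff

/-- A normal program clause: a head atom and a body which is a conjunction of literals. -/
structure Clause where
  head : ℕ
  body : List Lit

/-- A (possibly infinite) propositional normal logic program. -/
abbrev Program := Set Clause

/-- Infinite-valued interpretations. -/
abbrev Interp := ℕ → TV

/-- the interpretation assigning `F₀` to every atom (denoted `∅` in the paper) -/
def botI : Interp := fun _ => TV.F O0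

def evalLit (I : Interp) : Lit → TV
  | .pos n => I n
  | .neg n => negv (I n)
  | .tt => TV.T O0
  | .ff => TV.F O0

/-- value of a body (conjunction evaluated by `min`; empty conjunction is `T₀`) -/
def evalBody (I : Interp) (b : List Lit) : TV :=
  (b.map (evalLit I)).foldr min (TV.T O0)

/-- least upper bound in `V` (well-defined by the lub-existence theorem) -/
def lub (S : Set TV) : TV := if h : ∃ v, IsLUB S v then h.choose else TV.Z

/-- the immediate consequence operator -/
def TP (P : Program) (I : Interp) : Interp :=
  fun p => lub {v | ∃ c ∈ P, c.head = p ∧ evalBody I c.body = v}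

/-- `I` is an (infinite-valued) model of `P` -/
def isModel (P : Program) (I : Interp) : Prop :=
  ∀ c ∈ P, evalBody I c.body ≤ I c.head

/-- the level set `I ∥ v` -/
def level (I : Interp) (v : TV) : Set ℕ := {p | I p = v}

/-- `I =_α J` -/
def eqA (α : Ord1) (I J : Interp) : Prop :=
  ∀ β ≤ α, level I (TV.T β) = level J (TV.T β) ∧ level I (TV.F β) = level J (TV.F β)

/-- `I ⊏_α J` -/
def sqltA (α : Ord1) (I J : Interp) : Prop :=
  (∀ β < α, eqA β I J) ∧
    ((level I (TV.T α) ⊂ level J (TV.T α) ∧ level J (TV.F α) ⊆ level I (TV.F α)) ∨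
     (level I (TV.T α) ⊆ level J (TV.T α) ∧ level J (TV.F α) ⊂ level I (TV.F α)))

/-- `I ⊑_α J` -/
def sqleA (α : Ord1) (I J : Interp) : Prop := eqA α I J ∨ sqltA α I J

/-- `I ⊏_∞ J` -/
def sqltInf (I J : Interp) : Prop := ∃ α : Ord1, sqltA α I J

/-- `I ⊑_∞ J` -/
def sqleInf (I J : Interp) : Prop := I = J ∨ sqltInf I J

/-- the sequence `T_P^n(I)` is an `α`-chain -/
def isChainA (P : Program) (α : Ord1) (I : Interp) : Prop :=
  ∀ n : ℕ, sqleA α ((TP P)^[n] I) ((TP P)^[n + 1] I)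

/-- the interpretation `T_{P,α}^ω(I)` -/
def TPomega (P : Program) (α : Ord1) (I : Interp) : Interp := fun p =>
  if ordOf (I p) < (α.1 : WithTop Ordinal) then I p
  else if ∃ n : ℕ, (TP P)^[n] I p = TV.T α then TV.T α
  else if ∀ n : ℕ, (TP P)^[n] I p = TV.F α then TV.F α
  else TV.F α.succ

/-- `⊔_{β<α} M_β` for a family defined below `α` -/
def sqcupI (α : Ord1) (f : ∀ β : Ordinal, β < α.1 → Interp) : Interp := fun p =>
  if h : ∃ β : Ordinal, ∃ hb : β < α.1, ordOf (f β hb p) = (β : WithTop Ordinal)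
  then f h.choose h.choose_spec.choose p
  else TV.F α

/-- the approximations `M_α` to the minimum model (junk values for `α ≥ ω₁`) -/
def MA (P : Program) (o : Ordinal) : Interp :=
  Ordinal.limitRecOn o
    (TPomega P O0 botI)
    (fun o' ih => if h : o' + 1 < ω₁ then TPomega P ⟨o' + 1, h⟩ ih else ih)
    (fun o' _ ih =>
      if h : o' < ω₁ then TPomega P ⟨o', h⟩ (sqcupI ⟨o', h⟩ ih) else botI)

/-- `M_α` for a countable ordinal `α` -/
def Mα (P : Program) (α : Ord1) : Interp := MA P α.1

/-- the defining property of the depth `δ` of a program -/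
def isDepth (P : Program) (δ : Ord1) : Prop :=
  (level (Mα P δ) (TV.T δ) = ∅ ∧ level (Mα P δ) (TV.F δ) = ∅) ∧
    ∀ β : Ord1, β < δ →
      (level (Mα P β) (TV.T β) ≠ ∅ ∨ level (Mα P β) (TV.F β) ≠ ∅)

/-- the depth of a program -/
def depth (P : Program) : Ord1 :=
  if h : ∃ δ : Ord1, isDepth P δ then h.choose else O0

/-- the minimum model `M_P` -/
def MP (P : Program) : Interp := fun p =>
  if ordOf (Mα P (depth P) p) < ((depth P).1 : WithTop Ordinal)
  then Mα P (depth P) p else TV.Z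

/-- the set of all infinite-valued models of `P` -/
def models (P : Program) : Set Interp := {I | isModel P I}

/-- `M ♯ α`: the part of `M` consisting of values of order `α` -/
def sharp (I : Interp) (α : Ord1) : Set (ℕ × TV) :=
  {pv | I pv.1 = pv.2 ∧ ordOf pv.2 = (α.1 : WithTop Ordinal)}

/-- `⨀^α S = ⋀^α S ∪ ⋁^α S` -/
def odot (α : Ord1) (S : Set Interp) : Set (ℕ × TV) :=
  {pv | (∃ p : ℕ, pv = (p, TV.T α) ∧ ∀ M ∈ S, M p = TV.T α) ∨
        (∃ p : ℕ, pv = (p, TV.F α) ∧ ∃ M ∈ S, M p = TV.F α)}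

/-- the sets `S_α` of the model intersection construction (junk for `α ≥ ω₁`) -/
def SA (P : Program) (o : Ordinal) : Set Interp :=
  Ordinal.limitRecOn o
    {M ∈ models P | sharp M O0 = odot O0 (models P)}
    (fun o' ih =>
      if h : o' + 1 < ω₁ then {M ∈ ih | sharp M ⟨o' + 1, h⟩ = odot ⟨o' + 1, h⟩ ih} else ih)
    (fun o' _ ih =>
      if h : o' < ω₁ then
        {M : Interp | M ∈ (⋂ (b : Ordinal) (hb : b < o'), ih b hb) ∧
          sharp M ⟨o', h⟩ = odot ⟨o', h⟩ (⋂ (b : Ordinal) (hb : b < o'), ih b hb)}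
      else ∅)

/-- `I` is reasonable if it never assigns `T_α` with `α` a limit ordinal. -/
def reasonable (I : Interp) : Prop :=
  ∀ (p : ℕ) (α : Ord1), I p = TV.T α → ¬ Order.IsSuccLimit α.1

/-- a single value is "good" if it is not `T_α` with `α` a limit ordinal -/
def goodv (v : TV) : Prop := ∀ α : Ord1, v = TV.T α → ¬ Order.IsSuccLimit α.1

lemma TV.T_inj {a b : Ord1} (h : TV.T a = TV.T b) : a = b := by
  simpa [TV.T] using h

lemma goodv_succ (a : Ord1) : goodv (TV.T a.succ) := by
  intro α hα _
  have : a.succ = α := TV.T_inj hα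
  subst this
  simp only [Ord1.succ, Ordinal.add_one_eq_succ] at *
  exact Order.not_isSuccLimit_succ _ ‹_›

lemma goodv_T0 : goodv (TV.T O0) := by
  intro α hα hl
  have : O0 = α := TV.T_inj hα
  subst this
  exact Ordinal.not_isSuccLimit_zero hl

lemma goodv_F (a : Ord1) : goodv (TV.F a) := by
  intro α hα
  exact absurd hα (by simp [TV.F, TV.T])

lemma goodv_Z : goodv TV.Z := by
  intro α hα
  exact absurd hα (by simp [TV.Z, TV.T])

lemma goodv_negv (v : TV) : goodv (negv v) := by
  rcases v with a | b
  · exact goodv_succ _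
  · rcases b with u | a
    · exact goodv_Z
    · exact goodv_F _

lemma goodv_evalLit {I : Interp} (hI : reasonable I) (l : Lit) : goodv (evalLit I l) := by
  cases l with
  | pos n => intro α hα; exact hI n α hα
  | neg n => exact goodv_negv _
  | tt => exact goodv_T0
  | ff => exact goodv_F _

lemma goodv_min {v w : TV} (hv : goodv v) (hw : goodv w) : goodv (min v w) := by
  intro α hα
  rcases le_total v w with h | h
  · exact hv α ((le_antisymm inf_le_left (le_inf le_rfl h)).symm.trans hα)
  · exact hw α ((le_antisymm inf_le_right (le_inf h le_rfl)).symm.trans hα)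

lemma goodv_evalBody {I : Interp} (hI : reasonable I) (b : List Lit) :
    goodv (evalBody I b) := by
  induction b with
  | nil => exact goodv_T0
  | cons x xs ih =>
    simp only [evalBody, List.map_cons, List.foldr_cons] at *
    exact goodv_min (goodv_evalLit hI x) ih

lemma TV.T_le_T {a b : Ord1} : TV.T a ≤ TV.T b ↔ b ≤ a := by
  simp [TV.T, Sum.Lex.inr_le_inr_iff]

lemma le_T_succ_of_lt_T {s : TV} {α : Ord1} (h : s < TV.T α) : s ≤ TV.T α.succ := by
  rcases s with a | b
  · exact Sum.Lex.inl_le_inr _ _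
  · rcases b with u | a
    · exact Sum.Lex.inr_le_inr_iff.2 (Sum.Lex.inl_le_inr _ _)
    · -- s = T (ofDual a); from h we get α < ofDual a, so α+1 ≤ ofDual a
      have : TV.T (OrderDual.ofDual a) < TV.T α := h
      have hlt : α < OrderDual.ofDual a := by
        by_contra hle
        exact absurd (TV.T_le_T.2 (not_lt.1 hle)) (not_le.2 this)
      have : α.1 + 1 ≤ (OrderDual.ofDual a).1 := by
        rw [Ordinal.add_one_eq_succ]
        exact Order.succ_le_of_lt hlt
      exact TV.T_le_T.2 this

lemma lt_succ_ord (α : Ord1) : α < α.succ := by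
  show α.1 < α.1 + 1
  rw [Ordinal.add_one_eq_succ]
  exact Order.lt_succ α.1

lemma T_succ_lt_T (α : Ord1) : TV.T α.succ < TV.T α := by
  refine lt_of_le_of_ne (TV.T_le_T.2 (lt_succ_ord α).le) (fun hc => ?_)
  exact absurd (TV.T_inj hc) (lt_succ_ord α).ne'

lemma goodv_lub {S : Set TV} (hS : ∀ v ∈ S, goodv v) : goodv (lub S) := by
  unfold lub
  split
  · next h =>
    intro α hα hl
    have hlub : IsLUB S (TV.T α) := hα ▸ h.choose_spec
    by_cases hmem : TV.T α ∈ S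
    · exact hS _ hmem α rfl hl
    · have hub : TV.T α.succ ∈ upperBounds S := by
        intro s hs
        have hle : s ≤ TV.T α := hlub.1 hs
        have hne : s ≠ TV.T α := fun e => hmem (e ▸ hs)
        exact le_T_succ_of_lt_T (lt_of_le_of_ne hle hne)
      exact absurd (hlub.2 hub) (not_le.2 (T_succ_lt_T α))
  · exact goodv_Z

/-- `T_P` preserves reasonableness; hence all the iterates `T_P^n(I)` are reasonable. -/
theorem TP_preserves_reasonable (P : Program) (I : Interp) (h : reasonable I) :
    reasonable (TP P I) ∧ ∀ n : ℕ, reasonable ((TP P)^[n] I) := by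
  have key : ∀ J : Interp, reasonable J → reasonable (TP P J) := by
    intro J hJ p α hα
    refine goodv_lub (S := {v | ∃ c ∈ P, c.head = p ∧ evalBody J c.body = v}) ?_ α hα
    rintro v ⟨c, _, _, hv⟩
    exact hv ▸ goodv_evalBody hJ c.body
  refine ⟨key I h, ?_⟩
  intro n
  induction n with
  | zero => simpa using h
  | succ n ih =>
    rw [Function.iterate_succ_apply']
    exact key _ ih

end IVS
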